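/- Hypergeometric expression of the attractor: for every real U, φ(U) = (Γ(5/4)/π) · Σ_{k≥0} (U/4)^{4k} / ((1/2)_k · (3/4)_k · k!) − (U²·Γ(3/4)/(8π)) · Σ_{k≥0} (U/4)^{4k} / ((5/4)_k · (3/2)_k · k!), where (a)_k = a(a+1)···(a+k−1) denotes the Pochhammer rising factorial and Γ is the Gamma function; both series converge absolutely for every U. -/

import Mathlib

open MeasureTheory Real

/-- The universal self-similar attractor `φ(U) = (1/(2π)) ∫ Q, exp(−Q⁴) cos(Q U)`. -/
noncomputable def phiFn (U : ℝ) : ℝ :=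
  (1 / (2 * Real.pi)) * ∫ Q : ℝ, Real.exp (-Q ^ 4) * Real.cos (Q * U)

/-- Term of the first `₀H₂({1/2, 3/4}, (U/4)⁴)` hypergeometric series, with the Pochhammer
rising factorial `(a)_k` given by `ascPochhammer`. -/
noncomputable def hyperTerm₁ (U : ℝ) (k : ℕ) : ℝ :=
  (U / 4) ^ (4 * k) /
    ((ascPochhammer ℝ k).eval (1 / 2) * (ascPochhammer ℝ k).eval (3 / 4) * (k.factorial : ℝ))

/-- Term of the second `₀H₂({5/4, 3/2}, (U/4)⁴)` hypergeometric series. -/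
noncomputable def hyperTerm₂ (U : ℝ) (k : ℕ) : ℝ :=
  (U / 4) ^ (4 * k) /
    ((ascPochhammer ℝ k).eval (5 / 4) * (ascPochhammer ℝ k).eval (3 / 2) * (k.factorial : ℝ))

set_option maxHeartbeats 1000000

section Aux

open Set

lemma poch_pos {x : ℝ} (hx : 0 < x) (k : ℕ) : 0 < (ascPochhammer ℝ k).eval x := by
  induction k with
  | zero => simp
  | succ n ih =>
    rw [ascPochhammer_succ_eval]
    exact mul_pos ih (by positivity)

lemma poch_ge_one {x : ℝ} (hx : 1 ≤ x) (k : ℕ) : (k.factorial : ℝ) ≤ (ascPochhammer ℝ k).eval x := by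
  induction k with
  | zero => simp
  | succ n ih =>
    rw [ascPochhammer_succ_eval, Nat.factorial_succ]
    push_cast
    have h1 : ((n:ℝ) + 1) ≤ x + n := by linarith
    have h2 : (0:ℝ) ≤ (n.factorial : ℝ) := by positivity
    calc ((n:ℝ)+1) * n.factorial ≤ (x + n) * (ascPochhammer ℝ n).eval x := by
          exact mul_le_mul h1 ih h2 (by linarith [poch_pos (by linarith : (0:ℝ) < x) n])
      _ = (ascPochhammer ℝ n).eval x * (x + n) := by ring

lemma poch_ge_small {x : ℝ} (hx0 : 0 < x) (hx : x ≤ 1) (k : ℕ) :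
    x ^ k * (k.factorial : ℝ) ≤ (ascPochhammer ℝ k).eval x := by
  induction k with
  | zero => simp
  | succ n ih =>
    rw [ascPochhammer_succ_eval, Nat.factorial_succ]
    push_cast
    have h1 : x * ((n:ℝ) + 1) ≤ x + n := by nlinarith
    have hp := poch_pos hx0 n
    calc x ^ (n+1) * (((n:ℝ)+1) * n.factorial)
        = (x ^ n * n.factorial) * (x * ((n:ℝ)+1)) := by ring
      _ ≤ (ascPochhammer ℝ n).eval x * (x + n) := by
          apply mul_le_mul ih h1 (by positivity) (le_of_lt hp)

lemma gamma_poch {x : ℝ} (hx : 0 < x) (k : ℕ) :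
    Real.Gamma (x + k) = (ascPochhammer ℝ k).eval x * Real.Gamma x := by
  induction k with
  | zero => simp
  | succ n ih =>
    have h : x + ((n:ℕ)+1 : ℕ) = (x + n) + 1 := by push_cast; ring
    rw [h, Real.Gamma_add_one (by positivity), ih, ascPochhammer_succ_eval]
    ring

lemma fact4 (k : ℕ) : ((4*k).factorial : ℝ) =
    4 ^ (4*k) * (k.factorial : ℝ) * (ascPochhammer ℝ k).eval (1/4) *
      (ascPochhammer ℝ k).eval (1/2) * (ascPochhammer ℝ k).eval (3/4) := by
  induction k with
  | zero => simp
  | succ n ih =>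
    have h : 4 * (n+1) = (4*n+3)+1 := by ring
    rw [h, Nat.factorial_succ, show 4*n+3 = (4*n+2)+1 from rfl, Nat.factorial_succ,
      show 4*n+2 = (4*n+1)+1 from rfl, Nat.factorial_succ,
      show 4*n+1 = (4*n)+1 from rfl, Nat.factorial_succ]
    push_cast
    rw [ih, ascPochhammer_succ_eval, ascPochhammer_succ_eval, ascPochhammer_succ_eval,
      Nat.factorial_succ]
    push_cast
    ring

lemma fact4b (k : ℕ) : ((4*k+2).factorial : ℝ) =
    2 * 4 ^ (4*k) * (k.factorial : ℝ) * (ascPochhammer ℝ k).eval (3/4) *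
      (ascPochhammer ℝ k).eval (5/4) * (ascPochhammer ℝ k).eval (3/2) := by
  induction k with
  | zero => simp
  | succ n ih =>
    have h : 4 * (n+1) + 2 = (4*n+5)+1 := by ring
    rw [h, Nat.factorial_succ, show 4*n+5 = (4*n+4)+1 from rfl, Nat.factorial_succ,
      show 4*n+4 = (4*n+3)+1 from rfl, Nat.factorial_succ,
      show 4*n+3 = (4*n+2)+1 from rfl, Nat.factorial_succ]
    push_cast
    rw [ih, ascPochhammer_succ_eval, ascPochhammer_succ_eval, ascPochhammer_succ_eval,
      Nat.factorial_succ]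
    push_cast
    ring

lemma int_Ioi (n : ℕ) : ∫ x in Ioi (0:ℝ), x ^ (2*n) * Real.exp (-x^4)
    = (1/4) * Real.Gamma ((2*n+1)/4) := by
  have h := integral_rpow_mul_exp_neg_rpow (p := 4) (q := ((2*n : ℕ) : ℝ))
    (by norm_num) (lt_of_lt_of_le neg_one_lt_zero (by positivity))
  have e : ∫ x in Ioi (0:ℝ), x ^ (((2*n : ℕ) : ℝ)) * Real.exp (-x ^ (4:ℝ))
      = ∫ x in Ioi (0:ℝ), x ^ (2*n) * Real.exp (-x^4) := by
    refine setIntegral_congr_fun measurableSet_Ioi (fun x hx => ?_)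
    rw [Real.rpow_natCast, show (4:ℝ) = ((4:ℕ):ℝ) by norm_num, Real.rpow_natCast]
  rw [← e, h]
  push_cast
  ring_nf

lemma integrableOn_Ioi_pow_exp (n : ℕ) :
    IntegrableOn (fun x : ℝ => x ^ (2*n) * Real.exp (-x^4)) (Ioi 0) := by
  have h := integrableOn_rpow_mul_exp_neg_rpow (p := 4) (s := ((2*n : ℕ) : ℝ))
    (lt_of_lt_of_le neg_one_lt_zero (by positivity)) (by norm_num)
  refine h.congr_fun (fun x hx => ?_) measurableSet_Ioi
  dsimp only
  rw [Real.rpow_natCast, show (4:ℝ) = ((4:ℕ):ℝ) by norm_num, Real.rpow_natCast]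

lemma integrable_pow_exp (n : ℕ) :
    Integrable (fun x : ℝ => x ^ (2*n) * Real.exp (-x^4)) := by
  have hIoi := integrableOn_Ioi_pow_exp n
  have hIic : IntegrableOn (fun x : ℝ => x ^ (2*n) * Real.exp (-x^4)) (Iic 0) := by
    rw [← Measure.map_neg_eq_self (volume : Measure ℝ)]
    have m : MeasurableEmbedding fun x : ℝ => -x :=
      (Homeomorph.neg ℝ).measurableEmbedding
    rw [m.integrableOn_map_iff]
    have e : ((fun x : ℝ => x ^ (2*n) * Real.exp (-x^4)) ∘ fun x : ℝ => -x)
        = fun x : ℝ => x ^ (2*n) * Real.exp (-x^4) := by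
      funext x
      simp only [Function.comp]
      rw [(even_two_mul n).neg_pow, (by decide : Even 4).neg_pow]
    rw [e, show (fun x : ℝ => -x) ⁻¹' (Iic 0) = Ici 0 by simp]
    exact (integrableOn_Ici_iff_integrableOn_Ioi).mpr hIoi
  have := hIic.union hIoi
  rwa [Iic_union_Ioi, integrableOn_univ] at this

lemma int_full (n : ℕ) : ∫ x : ℝ, x ^ (2*n) * Real.exp (-x^4)
    = (1/2) * Real.Gamma ((2*n+1)/4) := by
  have h := integral_comp_abs (f := fun x : ℝ => x ^ (2*n) * Real.exp (-x^4))
  have e : (fun x : ℝ => |x| ^ (2*n) * Real.exp (-|x|^4))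
      = fun x : ℝ => x ^ (2*n) * Real.exp (-x^4) := by
    funext x
    rw [(even_two_mul n).pow_abs, (by decide : Even 4).pow_abs]
  rw [show (∫ x : ℝ, |x| ^ (2*n) * Real.exp (-|x|^4)) = _ from congrArg _ e] at h
  rw [h, int_Ioi]
  ring

end Aux

/-- Hypergeometric expression of the attractor: for every real `U`, both series converge
absolutely and
`φ(U) = (Γ(5/4)/π) ₀H₂({1/2,3/4},(U/4)⁴) − (U² Γ(3/4)/(8π)) ₀H₂({5/4,3/2},(U/4)⁴)`. -/
theorem phiFn_hypergeometric (U : ℝ) :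
    (Summable fun k : ℕ => |hyperTerm₁ U k|) ∧
    (Summable fun k : ℕ => |hyperTerm₂ U k|) ∧
    phiFn U = Real.Gamma (5 / 4) / Real.pi * ∑' k : ℕ, hyperTerm₁ U k
      - U ^ 2 * Real.Gamma (3 / 4) / (8 * Real.pi) * ∑' k : ℕ, hyperTerm₂ U k := by
  -- positivity facts
  have h12 : ∀ k, 0 < (ascPochhammer ℝ k).eval (1/2 : ℝ) := poch_pos (by norm_num)
  have h34 : ∀ k, 0 < (ascPochhammer ℝ k).eval (3/4 : ℝ) := poch_pos (by norm_num)
  have h14 : ∀ k, 0 < (ascPochhammer ℝ k).eval (1/4 : ℝ) := poch_pos (by norm_num)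
  have h54 : ∀ k, 0 < (ascPochhammer ℝ k).eval (5/4 : ℝ) := poch_pos (by norm_num)
  have h32 : ∀ k, 0 < (ascPochhammer ℝ k).eval (3/2 : ℝ) := poch_pos (by norm_num)
  have hfacpos : ∀ k : ℕ, (0:ℝ) < k.factorial := fun k => by positivity
  -- summability of the hypergeometric terms
  have ht1nn : ∀ k, 0 ≤ hyperTerm₁ U k := by
    intro k
    unfold hyperTerm₁
    apply div_nonneg
    · rw [show 4*k = 2*(2*k) by ring]
      exact (even_two_mul (2*k)).pow_nonneg _
    · exact le_of_lt (mul_pos (mul_pos (h12 k) (h34 k)) (hfacpos k))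
  have ht2nn : ∀ k, 0 ≤ hyperTerm₂ U k := by
    intro k
    unfold hyperTerm₂
    apply div_nonneg
    · rw [show 4*k = 2*(2*k) by ring]
      exact (even_two_mul (2*k)).pow_nonneg _
    · exact le_of_lt (mul_pos (mul_pos (h54 k) (h32 k)) (hfacpos k))
  have hb1 : ∀ k : ℕ, hyperTerm₁ U k ≤ ((U/4)^4 * (8/3))^k / (k.factorial : ℝ) := by
    intro k
    unfold hyperTerm₁
    have h2 := poch_ge_small (by norm_num : (0:ℝ) < 1/2) (by norm_num) k
    have h3 := poch_ge_small (by norm_num : (0:ℝ) < 3/4) (by norm_num) k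
    have hk1 : (1:ℝ) ≤ (k.factorial : ℝ) := by exact_mod_cast (Nat.factorial_pos k)
    have hden : ((3:ℝ)/8)^k * (k.factorial : ℝ) ≤
        (ascPochhammer ℝ k).eval (1/2) * (ascPochhammer ℝ k).eval (3/4) * k.factorial := by
      have e : ((3:ℝ)/8)^k = (1/2:ℝ)^k * (3/4:ℝ)^k := by rw [← mul_pow]; norm_num
      rw [e]
      have step : (1/2:ℝ)^k * (3/4:ℝ)^k * (k.factorial:ℝ) ≤
          ((1/2:ℝ)^k * k.factorial) * ((3/4:ℝ)^k * k.factorial) * k.factorial := by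
        have p1 : (0:ℝ) ≤ (1/2:ℝ)^k := by positivity
        have p2 : (0:ℝ) ≤ (3/4:ℝ)^k := by positivity
        have hf3 : (k.factorial:ℝ) ≤ k.factorial * k.factorial * k.factorial := by nlinarith
        calc (1/2:ℝ)^k * (3/4:ℝ)^k * (k.factorial:ℝ)
            = ((1/2:ℝ)^k * (3/4:ℝ)^k) * (k.factorial:ℝ) := by ring
          _ ≤ ((1/2:ℝ)^k * (3/4:ℝ)^k) * ((k.factorial:ℝ) * k.factorial * k.factorial) :=
              mul_le_mul_of_nonneg_left hf3 (mul_nonneg p1 p2)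
          _ = ((1/2:ℝ)^k * k.factorial) * ((3/4:ℝ)^k * k.factorial) * k.factorial := by ring
      refine step.trans ?_
      have := mul_le_mul (mul_le_mul h2 h3 (by positivity) (le_of_lt (h12 k)))
        (le_refl (k.factorial:ℝ)) (by positivity) ?_
      · exact this
      · exact le_of_lt (mul_pos (h12 k) (h34 k))
    have hD : (0:ℝ) < (ascPochhammer ℝ k).eval (1/2) * (ascPochhammer ℝ k).eval (3/4)
        * k.factorial := mul_pos (mul_pos (h12 k) (h34 k)) (hfacpos k)
    rw [div_le_div_iff₀ hD (hfacpos k)]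
    rw [mul_pow, pow_mul]
    have key : (k.factorial : ℝ) ≤ (8/3:ℝ)^k *
        ((ascPochhammer ℝ k).eval (1/2) * (ascPochhammer ℝ k).eval (3/4) * k.factorial) := by
      calc (k.factorial:ℝ) = ((8/3:ℝ)^k * (3/8:ℝ)^k) * k.factorial := by
            rw [← mul_pow]; norm_num
        _ = (8/3:ℝ)^k * ((3/8:ℝ)^k * k.factorial) := by ring
        _ ≤ _ := mul_le_mul_of_nonneg_left hden (by positivity)
    calc ((U/4)^4)^k * (k.factorial:ℝ)
        ≤ ((U/4)^4)^k * ((8/3:ℝ)^k *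
          ((ascPochhammer ℝ k).eval (1/2) * (ascPochhammer ℝ k).eval (3/4) * k.factorial)) :=
          mul_le_mul_of_nonneg_left key (by positivity)
      _ = ((U/4)^4)^k * (8/3:ℝ)^k *
          ((ascPochhammer ℝ k).eval (1/2) * (ascPochhammer ℝ k).eval (3/4) * k.factorial) := by
          ring
  have hb2 : ∀ k : ℕ, hyperTerm₂ U k ≤ ((U/4)^4)^k / (k.factorial : ℝ) := by
    intro k
    unfold hyperTerm₂
    have h5 := poch_ge_one (by norm_num : (1:ℝ) ≤ 5/4) k
    have h6 := poch_ge_one (by norm_num : (1:ℝ) ≤ 3/2) k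
    have hk1 : (1:ℝ) ≤ (k.factorial : ℝ) := by exact_mod_cast (Nat.factorial_pos k)
    have hD : (0:ℝ) < (ascPochhammer ℝ k).eval (5/4) * (ascPochhammer ℝ k).eval (3/2)
        * k.factorial := mul_pos (mul_pos (h54 k) (h32 k)) (hfacpos k)
    rw [div_le_div_iff₀ hD (hfacpos k), pow_mul]
    have key : (k.factorial : ℝ) ≤
        (ascPochhammer ℝ k).eval (5/4) * (ascPochhammer ℝ k).eval (3/2) * k.factorial := by
      have h5' : (1:ℝ) ≤ (ascPochhammer ℝ k).eval (5/4) := hk1.trans h5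
      have h6' : (1:ℝ) ≤ (ascPochhammer ℝ k).eval (3/2) := hk1.trans h6
      have hp : (1:ℝ) ≤ (ascPochhammer ℝ k).eval (5/4) * (ascPochhammer ℝ k).eval (3/2) := by
        nlinarith
      calc (k.factorial : ℝ) = 1 * (k.factorial : ℝ) := by ring
        _ ≤ ((ascPochhammer ℝ k).eval (5/4) * (ascPochhammer ℝ k).eval (3/2)) * k.factorial :=
            mul_le_mul_of_nonneg_right hp (hfacpos k).le
    exact mul_le_mul_of_nonneg_left key (by positivity)
  have hS1 : Summable fun k : ℕ => hyperTerm₁ U k :=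
    Summable.of_nonneg_of_le ht1nn hb1 (Real.summable_pow_div_factorial _)
  have hS2 : Summable fun k : ℕ => hyperTerm₂ U k :=
    Summable.of_nonneg_of_le ht2nn hb2 (Real.summable_pow_div_factorial _)
  have habs1 : Summable fun k : ℕ => |hyperTerm₁ U k| := by
    have e : (fun k : ℕ => |hyperTerm₁ U k|) = fun k => hyperTerm₁ U k :=
      funext fun k => abs_of_nonneg (ht1nn k)
    rw [e]; exact hS1
  have habs2 : Summable fun k : ℕ => |hyperTerm₂ U k| := by
    have e : (fun k : ℕ => |hyperTerm₂ U k|) = fun k => hyperTerm₂ U k :=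
      funext fun k => abs_of_nonneg (ht2nn k)
    rw [e]; exact hS2
  -- the coefficient sequence of the cosine expansion
  set c : ℕ → ℝ := fun n =>
    (-1:ℝ)^n * U^(2*n) / ((2*n).factorial : ℝ) * ((1/2) * Real.Gamma ((2*(n:ℝ)+1)/4)) with hc
  set g : ℕ → ℝ := fun n =>
    U^(2*n) / ((2*n).factorial : ℝ) * ((1/2) * Real.Gamma ((2*(n:ℝ)+1)/4)) with hg
  have hgamma_pos : ∀ n : ℕ, 0 < Real.Gamma ((2*(n:ℝ)+1)/4) := fun n =>
    Real.Gamma_pos_of_pos (by positivity)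
  have hg_sum : Summable g := by
    rw [← summable_nat_add_iff 4]
    have hmaj : Summable (fun n : ℕ => (1/2) * ((U^2)^(n+4) / ((n+4).factorial : ℝ))) :=
      Summable.mul_left _ ((summable_nat_add_iff 4).mpr (Real.summable_pow_div_factorial (U^2)))
    refine hmaj.of_nonneg_of_le (fun n => ?_) (fun n => ?_)
    · exact mul_nonneg (div_nonneg ((even_two_mul _).pow_nonneg U) (hfacpos _).le)
        (mul_nonneg (by norm_num) (hgamma_pos _).le)
    · set m := n + 4 with hm
      have hm4 : (4:ℝ) ≤ (m:ℝ) := by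
        have : 4 ≤ m := by omega
        exact_mod_cast this
      have hΓ : Real.Gamma ((2*(m:ℝ)+1)/4) ≤ (m.factorial : ℝ) := by
        have h1 : ((2*(m:ℝ)+1)/4) ∈ Set.Ici (2:ℝ) := by
          simp only [Set.mem_Ici]; linarith
        have h2 : ((m:ℝ)+1) ∈ Set.Ici (2:ℝ) := by
          simp only [Set.mem_Ici]; linarith
        have h3 : ((2*(m:ℝ)+1)/4) ≤ (m:ℝ)+1 := by linarith
        have := Real.Gamma_strictMonoOn_Ici.monotoneOn h1 h2 h3
        rwa [Real.Gamma_nat_eq_factorial] at this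
      have hfac : ((m.factorial : ℝ)) * (m.factorial : ℝ) ≤ ((2*m).factorial : ℝ) := by
        exact_mod_cast Nat.le_of_dvd (Nat.factorial_pos _)
          (by simpa [two_mul] using Nat.factorial_mul_factorial_dvd_factorial_add m m)
      have habsU : U^(2*m) = (U^2)^m := pow_mul U 2 m
      calc g m = (1/2) * ((U^2)^m * Real.Gamma ((2*(m:ℝ)+1)/4) / ((2*m).factorial : ℝ)) := by
            simp only [hg]; rw [habsU]; ring
        _ ≤ (1/2) * ((U^2)^m * (m.factorial:ℝ) / ((m.factorial:ℝ) * m.factorial)) := by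
            gcongr <;> positivity
        _ = (1/2) * ((U^2)^m / (m.factorial : ℝ)) := by
            have hne : ((m.factorial : ℝ)) ≠ 0 := (hfacpos m).ne'
            field_simp
  -- the integrand expansion
  set F : ℕ → ℝ → ℝ := fun n Q =>
    (-1:ℝ)^n * U^(2*n) / ((2*n).factorial : ℝ) * (Q ^ (2*n) * Real.exp (-Q^4)) with hF
  have hFint : ∀ n, Integrable (F n) := fun n => (integrable_pow_exp n).const_mul _
  have hFnorm : ∀ n : ℕ, (∫ Q : ℝ, ‖F n Q‖) = g n := by
    intro n
    have e : (fun Q : ℝ => ‖F n Q‖)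
        = fun Q : ℝ => U^(2*n) / ((2*n).factorial : ℝ) * (Q ^ (2*n) * Real.exp (-Q^4)) := by
      funext Q
      simp only [hF, Real.norm_eq_abs, abs_mul, abs_div, abs_pow, abs_neg, abs_one, one_pow,
        one_mul, Nat.abs_cast, Real.abs_exp, (even_two_mul n).pow_abs]
    rw [e, integral_const_mul, int_full n]
  have hgsum' : Summable fun n : ℕ => ∫ Q : ℝ, ‖F n Q‖ := by
    rw [show (fun n : ℕ => ∫ Q : ℝ, ‖F n Q‖) = g from funext hFnorm]
    exact hg_sum
  have hkey : (∫ Q : ℝ, Real.exp (-Q^4) * Real.cos (Q*U)) = ∑' n, c n := by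
    have h := integral_tsum_of_summable_integral_norm hFint hgsum'
    have hpt : ∀ Q : ℝ, (∑' n, F n Q) = Real.exp (-Q^4) * Real.cos (Q*U) := by
      intro Q
      have hcs := (Real.hasSum_cos (Q*U)).mul_left (Real.exp (-Q^4))
      have e : (fun n : ℕ => Real.exp (-Q^4) * ((-1:ℝ)^n * (Q*U)^(2*n) / ((2*n).factorial : ℝ)))
          = fun n => F n Q := by
        funext n
        simp only [hF]
        rw [mul_pow]
        ring
      rw [e] at hcs
      exact hcs.tsum_eq
    have hint : ∀ n : ℕ, (∫ Q : ℝ, F n Q) = c n := by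
      intro n
      simp only [hF, hc]
      rw [integral_const_mul, int_full n]
    calc (∫ Q : ℝ, Real.exp (-Q^4) * Real.cos (Q*U)) = ∫ Q : ℝ, ∑' n, F n Q :=
          integral_congr_ae (Filter.Eventually.of_forall fun Q => (hpt Q).symm)
      _ = ∑' n, ∫ Q : ℝ, F n Q := h.symm
      _ = ∑' n, c n := tsum_congr hint
  -- even and odd parts
  have gamma14 : Real.Gamma (1/4 : ℝ) = 4 * Real.Gamma (5/4 : ℝ) := by
    rw [show (5/4 : ℝ) = 1/4 + 1 by norm_num, Real.Gamma_add_one (by norm_num)]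
    ring
  have hceven : ∀ k : ℕ, c (2*k) = 2 * Real.Gamma (5/4) * hyperTerm₁ U k := by
    intro k
    have hΓ : Real.Gamma ((2*(((2*k : ℕ)):ℝ)+1)/4)
        = (ascPochhammer ℝ k).eval (1/4) * Real.Gamma (1/4) := by
      rw [show (2*(((2*k : ℕ)):ℝ)+1)/4 = 1/4 + (k:ℕ) by push_cast; ring]
      exact gamma_poch (by norm_num) k
    simp only [hc, hyperTerm₁]
    rw [hΓ, gamma14, show 2*(2*k) = 4*k by ring, fact4 k]
    have hneg : (-1:ℝ)^(2*k) = 1 := by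
      rw [pow_mul]; norm_num
    rw [hneg, div_pow, one_mul, div_mul_eq_mul_div, div_div, ← mul_div_assoc]
    have hD1 : (0:ℝ) < 4^(4*k) * k.factorial * (ascPochhammer ℝ k).eval (1/4)
        * (ascPochhammer ℝ k).eval (1/2) * (ascPochhammer ℝ k).eval (3/4) :=
      mul_pos (mul_pos (mul_pos (mul_pos (by positivity) (hfacpos k)) (h14 k)) (h12 k)) (h34 k)
    have hD2 : (0:ℝ) < 4^(4*k) * ((ascPochhammer ℝ k).eval (1/2)
        * (ascPochhammer ℝ k).eval (3/4) * k.factorial) :=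
      mul_pos (by positivity) (mul_pos (mul_pos (h12 k) (h34 k)) (hfacpos k))
    rw [div_eq_div_iff hD1.ne' hD2.ne']
    ring
  have hcodd : ∀ k : ℕ, c (2*k+1) = -(U^2 * Real.Gamma (3/4) / 4) * hyperTerm₂ U k := by
    intro k
    have hΓ : Real.Gamma ((2*(((2*k+1 : ℕ)):ℝ)+1)/4)
        = (ascPochhammer ℝ k).eval (3/4) * Real.Gamma (3/4) := by
      rw [show (2*(((2*k+1 : ℕ)):ℝ)+1)/4 = 3/4 + (k:ℕ) by push_cast; ring]
      exact gamma_poch (by norm_num) k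
    simp only [hc, hyperTerm₂]
    rw [hΓ, show 2*(2*k+1) = 4*k+2 by ring, fact4b k]
    have hneg : (-1:ℝ)^(2*k+1) = -1 := by
      rw [pow_succ, pow_mul]; norm_num
    rw [hneg, div_pow, div_mul_eq_mul_div, div_div, ← mul_div_assoc]
    have hD1 : (0:ℝ) < 2 * 4^(4*k) * k.factorial * (ascPochhammer ℝ k).eval (3/4)
        * (ascPochhammer ℝ k).eval (5/4) * (ascPochhammer ℝ k).eval (3/2) :=
      mul_pos (mul_pos (mul_pos (mul_pos (by positivity) (hfacpos k)) (h34 k)) (h54 k)) (h32 k)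
    have hD2 : (0:ℝ) < 4^(4*k) * ((ascPochhammer ℝ k).eval (5/4)
        * (ascPochhammer ℝ k).eval (3/2) * k.factorial) :=
      mul_pos (by positivity) (mul_pos (mul_pos (h54 k) (h32 k)) (hfacpos k))
    rw [div_eq_div_iff hD1.ne' hD2.ne']
    ring
  have hceven_sum : Summable fun k : ℕ => c (2*k) := by
    rw [show (fun k : ℕ => c (2*k)) = fun k => 2 * Real.Gamma (5/4) * hyperTerm₁ U k from
      funext hceven]
    exact hS1.mul_left _
  have hcodd_sum : Summable fun k : ℕ => c (2*k+1) := by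
    rw [show (fun k : ℕ => c (2*k+1)) = fun k => -(U^2 * Real.Gamma (3/4) / 4) * hyperTerm₂ U k
      from funext hcodd]
    exact hS2.mul_left _
  have hsplit := tsum_even_add_odd hceven_sum hcodd_sum
  have e1 : ∑' k : ℕ, c (2*k) = 2 * Real.Gamma (5/4) * ∑' k : ℕ, hyperTerm₁ U k := by
    rw [show (fun k : ℕ => c (2*k)) = fun k => 2 * Real.Gamma (5/4) * hyperTerm₁ U k from
      funext hceven]
    exact tsum_mul_left
  have e2 : ∑' k : ℕ, c (2*k+1)
      = -(U^2 * Real.Gamma (3/4) / 4) * ∑' k : ℕ, hyperTerm₂ U k := by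
    rw [show (fun k : ℕ => c (2*k+1)) = fun k => -(U^2 * Real.Gamma (3/4) / 4) * hyperTerm₂ U k
      from funext hcodd]
    exact tsum_mul_left
  refine ⟨habs1, habs2, ?_⟩
  unfold phiFn
  rw [show (fun Q : ℝ => Real.exp (-Q ^ 4) * Real.cos (Q * U))
    = fun Q : ℝ => Real.exp (-Q ^ 4) * Real.cos (Q * U) from rfl]
  rw [hkey, ← hsplit, e1, e2]
  have hπ : Real.pi ≠ 0 := Real.pi_ne_zero
  field_simp
  ring
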